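/- Let M ≥ 3 be an odd integer, n ∈ {1,2}, and Θ̄ = (θ̄_1,…,θ̄_{M-1}) with θ̄_k := k n π / M. Then for every l ∈ {1,…,M-1}, 𝓗̄_l(Θ̄) = -2i sin(2θ̄_1) / ((1 + e^{-2iθ̄_1})(1 + e^{2iθ̄_1})) = 𝒦̄(Θ̄); equivalently, 𝓗̄_l(Θ̄)/𝒦̄(Θ̄) = 1 for every l ∈ {1,…,M-1}. -/

import Mathlib

open Complex Real Finset

noncomputable section

/-- The angles `θ̄_k = k n π / M`. -/
def thbar (M n : ℕ) (k : ℕ) : ℝ := (k : ℝ) * n * π / M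

/-- `𝒦̄(Θ)`, for angles `θ : ℕ → ℝ` (with `θ 0 = 0` understood). -/
def KbarN (M : ℕ) (θ : ℕ → ℝ) : ℂ :=
  (1 + (-1 : ℂ) ^ M) / 2 +
    (-1 : ℂ) ^ M * ∑ k ∈ Finset.Icc 1 (M - 1),
      (-1 : ℂ) ^ k * Complex.exp (-2 * Complex.I * (θ k : ℂ))

/-- `𝓗̄_l(Θ)`, for angles `θ : ℕ → ℝ` (with `θ 0 = 0` understood). -/
def HbarN (M : ℕ) (θ : ℕ → ℝ) (l : ℕ) : ℂ :=
  (1 - (-1 : ℂ) ^ M) / 2 +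
    (∑ k ∈ Finset.range l,
      (-1 : ℂ) ^ (l + k) * Complex.exp (2 * Complex.I * ((θ l - θ k : ℝ) : ℂ))) +
    (-1 : ℂ) ^ M * ∑ k ∈ Finset.Icc l (M - 1),
      (-1 : ℂ) ^ (l + k) * Complex.exp (2 * Complex.I * ((θ l - θ k : ℝ) : ℂ))

theorem Hbar_at_thbar (M n : ℕ) (hM : 3 ≤ M) (hModd : Odd M) (hn : n = 1 ∨ n = 2) :
    ∀ l : ℕ, 1 ≤ l → l ≤ M - 1 →
      HbarN M (thbar M n) l =
          -2 * Complex.I * (Real.sin (2 * thbar M n 1) : ℂ) /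
            ((1 + Complex.exp (-2 * Complex.I * (thbar M n 1 : ℂ))) *
              (1 + Complex.exp (2 * Complex.I * (thbar M n 1 : ℂ)))) ∧
        HbarN M (thbar M n) l = KbarN M (thbar M n) ∧
        HbarN M (thbar M n) l / KbarN M (thbar M n) = 1 := by
  intro l hl1 hl2
  have hMR : (M : ℝ) ≠ 0 := Nat.cast_ne_zero.mpr (by omega)
  set θ := thbar M n with hθdef
  set ω : ℂ := Complex.exp (2 * Complex.I * ((θ 1 : ℝ) : ℂ)) with hωdef
  have hθk : ∀ k : ℕ, (θ k : ℝ) = (k : ℝ) * θ 1 := by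
    intro k; simp only [hθdef, thbar]; ring
  have hexp : ∀ k : ℕ, Complex.exp (2 * Complex.I * ((θ k : ℝ) : ℂ)) = ω ^ k := by
    intro k
    rw [hωdef, ← Complex.exp_nat_mul]
    congr 1
    rw [hθk k]; push_cast; ring
  have hω0 : ω ≠ 0 := Complex.exp_ne_zero _
  have hm1 : ((-1 : ℂ)) ^ M = -1 := hModd.neg_one_pow
  have hωM : ω ^ M = 1 := by
    rw [← hexp M]
    have h1 : (θ M : ℝ) = n * π := by
      simp only [hθdef, thbar]; field_simp
    rw [h1]
    push_cast
    rw [show (2 * Complex.I * ((n : ℂ) * (π : ℂ))) = (n : ℂ) * (2 * (π : ℂ) * Complex.I) by ring,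
      Complex.exp_nat_mul, Complex.exp_two_pi_mul_I, one_pow]
  have hωne1 : ω ≠ 1 := by
    intro h
    have h2 : Complex.exp (2 * Complex.I * ((θ 1 : ℝ) : ℂ)) = 1 := by rw [← hωdef]; exact h
    rw [Complex.exp_eq_one_iff] at h2
    obtain ⟨m, hm⟩ := h2
    have h3 : (2 * Complex.I) * ((θ 1 : ℝ) : ℂ) = (2 * Complex.I) * ((m : ℂ) * (π : ℂ)) := by
      rw [mul_assoc] at hm ⊢; rw [hm]; ring
    have h4 : ((θ 1 : ℝ) : ℂ) = ((m * π : ℝ) : ℂ) := by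
      have := mul_left_cancel₀ (by simp [Complex.I_ne_zero] : (2 : ℂ) * Complex.I ≠ 0) h3
      rw [this]; push_cast; ring
    have h5 : (θ 1 : ℝ) = m * π := by exact_mod_cast h4
    have h6 : (1 : ℝ) * n * π / M = m * π := by rw [← h5]; simp [hθdef, thbar]
    have h7 : (n : ℝ) = m * M := by
      field_simp at h6
      have hπ := Real.pi_ne_zero
      have : (n : ℝ) * π = m * M * π := by linear_combination π * h6
      exact mul_right_cancel₀ hπ this
    have h8 : (n : ℤ) = m * M := by exact_mod_cast h7
    have hMn : 1 ≤ n ∧ n ≤ 2 := by rcases hn with h | h <;> omega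
    rcases le_or_gt m 0 with hm0 | hm0
    · have : m * (M : ℤ) ≤ 0 := mul_nonpos_of_nonpos_of_nonneg hm0 (by positivity)
      omega
    · have : (M : ℤ) ≤ m * M := le_mul_of_one_le_left (by positivity) hm0
      omega
  have hωneg1 : ω ≠ -1 := by
    intro h
    rw [h, hm1] at hωM
    norm_num at hωM
  set z : ℂ := -ω⁻¹ with hzdef
  set w : ℂ := -ω with hwdef
  have hz1 : z ≠ 1 := by
    intro h
    apply hωneg1
    have h2 : ω⁻¹ = -1 := by rw [hzdef] at h; linear_combination -h
    rw [← inv_inv ω, h2]; norm_num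
  have hz0 : z - 1 ≠ 0 := sub_ne_zero.mpr hz1
  have hzM : z ^ M = -1 := by
    rw [hzdef, neg_pow, hm1, inv_pow, hωM]; norm_num
  have hwz1 : w * z = 1 := by
    rw [hwdef, hzdef]; field_simp
  have hwz : ∀ j : ℕ, w ^ j * z ^ j = 1 := by
    intro j; rw [← mul_pow, hwz1, one_pow]
  have hsplit : ∀ m : ℕ, m ≤ M →
      ∑ k ∈ Finset.range M, z ^ k
        = (∑ k ∈ Finset.range m, z ^ k) + ∑ k ∈ Finset.Icc m (M - 1), z ^ k := by
    intro m hm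
    have hu : Finset.range m ∪ Finset.Icc m (M - 1) = Finset.range M := by
      ext x; simp only [Finset.mem_union, Finset.mem_range, Finset.mem_Icc]; omega
    have hd : Disjoint (Finset.range m) (Finset.Icc m (M - 1)) := by
      rw [Finset.disjoint_left]
      intro a ha hb
      simp only [Finset.mem_range] at ha
      simp only [Finset.mem_Icc] at hb
      omega
    rw [← hu, Finset.sum_union hd]
  have htm : ∀ k : ℕ, ((-1 : ℂ)) ^ (l + k)
      * Complex.exp (2 * Complex.I * ((θ l - θ k : ℝ) : ℂ)) = w ^ l * z ^ k := by
    intro k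
    have h1 : (2 * Complex.I * ((θ l - θ k : ℝ) : ℂ))
        = 2 * Complex.I * ((θ l : ℝ) : ℂ) - 2 * Complex.I * ((θ k : ℝ) : ℂ) := by
      push_cast; ring
    rw [h1, Complex.exp_sub, hexp l, hexp k, hwdef, hzdef, pow_add]
    rw [neg_pow ω l, neg_pow ω⁻¹ k, inv_pow]
    field_simp
  have htk : ∀ k : ℕ, ((-1 : ℂ)) ^ k
      * Complex.exp (-2 * Complex.I * ((θ k : ℝ) : ℂ)) = z ^ k := by
    intro k
    have h1 : (-2 * Complex.I * ((θ k : ℝ) : ℂ))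
        = -(2 * Complex.I * ((θ k : ℝ) : ℂ)) := by ring
    rw [h1, Complex.exp_neg, hexp k, hzdef, neg_pow ω⁻¹ k, inv_pow]
  have hK : KbarN M θ = 1 + 2 / (z - 1) := by
    rw [KbarN, hm1]
    rw [Finset.sum_congr rfl (fun k _ => htk k)]
    have hs := hsplit 1 (by omega)
    have hicc : ∑ k ∈ Finset.Icc 1 (M - 1), z ^ k
        = (∑ k ∈ Finset.range M, z ^ k) - 1 := by
      rw [hs]; simp
    rw [hicc, geom_sum_eq hz1, hzM]
    field_simp
    ring
  have hH : HbarN M θ l = 1 + 2 / (z - 1) := by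
    rw [HbarN, hm1]
    rw [Finset.sum_congr rfl (fun k _ => htm k), Finset.sum_congr rfl (fun k _ => htm k)]
    rw [← Finset.mul_sum, ← Finset.mul_sum]
    have hicc : ∑ k ∈ Finset.Icc l (M - 1), z ^ k
        = (∑ k ∈ Finset.range M, z ^ k) - ∑ k ∈ Finset.range l, z ^ k := by
      have hs := hsplit l (by omega)
      linear_combination -hs
    rw [hicc, geom_sum_eq hz1, geom_sum_eq hz1, hzM]
    have hwzl := hwz l
    field_simp
    linear_combination 4 * hwzl
  have hinv : Complex.exp (-2 * Complex.I * ((θ 1 : ℝ) : ℂ)) = ω⁻¹ := by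
    rw [hωdef, ← Complex.exp_neg]; congr 1; ring
  have h1ω : (1 : ℂ) + ω ≠ 0 := by
    intro h; apply hωneg1; linear_combination h
  have h1ωi : (1 : ℂ) + ω⁻¹ ≠ 0 := by
    intro h
    apply hωneg1
    have h2 : ω⁻¹ = -1 := by linear_combination h
    rw [← inv_inv ω, h2]; norm_num
  have hsin : ((Real.sin (2 * θ 1) : ℝ) : ℂ) = (ω⁻¹ - ω) * Complex.I / 2 := by
    rw [Complex.ofReal_sin]
    rw [show ((2 * θ 1 : ℝ) : ℂ) = 2 * ((θ 1 : ℝ) : ℂ) by push_cast; ring]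
    rw [show Complex.sin (2 * ((θ 1 : ℝ) : ℂ))
        = (Complex.exp (-(2 * ((θ 1 : ℝ) : ℂ)) * Complex.I)
          - Complex.exp ((2 * ((θ 1 : ℝ) : ℂ)) * Complex.I)) * Complex.I / 2 from rfl]
    have e1 : Complex.exp (-(2 * ((θ 1 : ℝ) : ℂ)) * Complex.I) = ω⁻¹ := by
      rw [← hinv]; congr 1; ring
    have e2 : Complex.exp ((2 * ((θ 1 : ℝ) : ℂ)) * Complex.I) = ω := by
      rw [hωdef]; congr 1; ring
    rw [e1, e2]
  have hV : -2 * Complex.I * ((Real.sin (2 * θ 1) : ℝ) : ℂ) /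
        ((1 + Complex.exp (-2 * Complex.I * ((θ 1 : ℝ) : ℂ))) * (1 + ω))
      = 1 + 2 / (z - 1) := by
    rw [hsin, hinv, hzdef]
    have hnum : -2 * Complex.I * ((ω⁻¹ - ω) * Complex.I / 2) = ω⁻¹ - ω := by
      linear_combination (ω - ω⁻¹) * Complex.I_sq
    rw [hnum]
    have hden : (1 + ω⁻¹) * (1 + ω) ≠ 0 := mul_ne_zero h1ωi h1ω
    have hden2 : -ω⁻¹ - 1 ≠ 0 := by intro h; apply h1ωi; linear_combination -h
    have hneg : (-1 : ℂ) - ω ≠ 0 := fun h => h1ω (by linear_combination -h)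
    rw [div_eq_iff hden]
    field_simp
    ring
  have hKne : (1 : ℂ) + 2 / (z - 1) ≠ 0 := by
    intro h
    apply hωne1
    have h2 : z + 1 = 0 := by
      have h3 : z + 1 = (1 + 2 / (z - 1)) * (z - 1) := by field_simp; ring
      rw [h3, h, zero_mul]
    have h4 : ω⁻¹ = 1 := by rw [hzdef] at h2; linear_combination -h2
    rw [← inv_inv ω, h4]; norm_num
  refine ⟨?_, ?_, ?_⟩
  · rw [hH]; exact hV.symm
  · rw [hH, hK]
  · rw [hH, hK, div_self hKne]

end
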